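/- Suppose f ∈ ℝ^n and g ∈ ℝ^m satisfy the optimality conditions a = diag(e^{-f/ε}) K e^{-g/ε} and b = diag(e^{-g/ε}) Kᵀ e^{-f/ε}, and set P := diag(e^{-f/ε}) K diag(e^{-g/ε}). Then the primal objective value at P equals the dual objective value at (f,g): ⟨C, P⟩ + ε ⟨P, log P − 1_{n,m}⟩ = −⟨a, f⟩ − ⟨b, g⟩ − ε ⟨e^{-f/ε}, K e^{-g/ε}⟩. -/

import Mathlib

open Matrix

/-- If `(f, g)` satisfies the optimality conditions
`a = diag(e^{-f/ε}) K e^{-g/ε}` and `b = diag(e^{-g/ε}) Kᵀ e^{-f/ε}`, and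
`P := diag(e^{-f/ε}) K diag(e^{-g/ε})`, then the primal objective value at `P`
equals the dual objective value at `(f, g)`. -/
theorem strong_duality_at_optimum (n m : ℕ) (a : Fin n → ℝ) (b : Fin m → ℝ)
    (C : Matrix (Fin n) (Fin m) ℝ) (ε : ℝ) (hε : 0 < ε)
    (f : Fin n → ℝ) (g : Fin m → ℝ)
    (ha : ∀ i, a i =
      Real.exp (-f i / ε) *
        ((fun i j => Real.exp (-C i j / ε)) *ᵥ fun j => Real.exp (-g j / ε)) i)
    (hb : ∀ j, b j =
      Real.exp (-g j / ε) *
        ((fun i j => Real.exp (-C i j / ε))ᵀ *ᵥ fun i => Real.exp (-f i / ε)) j) :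
    let K : Matrix (Fin n) (Fin m) ℝ := fun i j => Real.exp (-C i j / ε)
    let P : Matrix (Fin n) (Fin m) ℝ :=
      fun i j => Real.exp (-f i / ε) * K i j * Real.exp (-g j / ε)
    (∑ i, ∑ j, C i j * P i j) + ε * ∑ i, ∑ j, P i j * (Real.log (P i j) - 1) =
      -(∑ i, a i * f i) - (∑ j, b j * g j) -
        ε * ∑ i, Real.exp (-f i / ε) * (K *ᵥ fun j => Real.exp (-g j / ε)) i := by
  intro K P
  have hε' : ε ≠ 0 := ne_of_gt hε
  have hP : ∀ i j, P i j = Real.exp (-f i / ε + -C i j / ε + -g j / ε) := by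
    intro i j
    simp only [P, K, Real.exp_add]
  have hlog : ∀ i j, Real.log (P i j) = -f i / ε + -C i j / ε + -g j / ε := by
    intro i j; rw [hP, Real.log_exp]
  have key : ∀ i j, C i j * P i j + ε * (P i j * (Real.log (P i j) - 1)) =
      -(f i * P i j) + (-(g j * P i j) + -(ε * P i j)) := by
    intro i j
    rw [hlog]
    field_simp
    ring
  have ha' : ∀ i, ∑ j, P i j = a i := by
    intro i
    rw [ha i]
    simp only [mulVec, dotProduct, Finset.mul_sum, P, K]
    exact Finset.sum_congr rfl fun j _ => by ring
  have hb' : ∀ j, ∑ i, P i j = b j := by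
    intro j
    rw [hb j]
    simp only [mulVec, dotProduct, Finset.mul_sum, transpose_apply, P, K]
    exact Finset.sum_congr rfl fun i _ => by
      change _ = Real.exp (-g j / ε) * (Real.exp (-C i j / ε) * Real.exp (-f i / ε))
      ring
  have hsum : ∑ i, Real.exp (-f i / ε) * (K *ᵥ fun j => Real.exp (-g j / ε)) i
      = ∑ i, ∑ j, P i j := by
    refine Finset.sum_congr rfl fun i _ => ?_
    simp only [mulVec, dotProduct, Finset.mul_sum, P, K]
    exact Finset.sum_congr rfl fun j _ => by ring
  calc (∑ i, ∑ j, C i j * P i j) + ε * ∑ i, ∑ j, P i j * (Real.log (P i j) - 1)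
      = ∑ i, ∑ j, (C i j * P i j + ε * (P i j * (Real.log (P i j) - 1))) := by
        rw [Finset.mul_sum]
        simp_rw [Finset.mul_sum]
        rw [← Finset.sum_add_distrib]
        refine Finset.sum_congr rfl fun i _ => ?_
        rw [← Finset.sum_add_distrib]
    _ = ∑ i, ∑ j, (-(f i * P i j) + (-(g j * P i j) + -(ε * P i j))) := by
        exact Finset.sum_congr rfl fun i _ => Finset.sum_congr rfl fun j _ => key i j
    _ = -(∑ i, a i * f i) - (∑ j, b j * g j) -
        ε * ∑ i, Real.exp (-f i / ε) * (K *ᵥ fun j => Real.exp (-g j / ε)) i := by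
        rw [hsum]
        simp_rw [Finset.sum_add_distrib, Finset.sum_neg_distrib]
        rw [Finset.sum_comm (s := Finset.univ) (t := Finset.univ)
          (f := fun i j => g j * P i j)]
        simp_rw [← Finset.mul_sum]
        simp_rw [ha', hb']
        simp_rw [mul_comm]
        ring
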